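/- Let t : Λ → B be a representation of a finitely aligned P-graph, v a vertex, α ∈ Λv, E ⊆ αΛ a finite exhaustive set, and F ⊆ vΛ the unique finite exhaustive set with E = αF. Then ∏_{γ∈E}(t_α t_α* − t_γ t_γ*) = t_α (∏_{β∈F}(t_v − t_β t_β*)) t_α*. In particular, ∏_{γ∈E}(t_α t_α* − t_γ t_γ*) = 0 if and only if t_v = ⋁_{β∈F} t_β t_β* (the join of the projections t_β t_β* in B). -/

import Mathlib

/-- A `P`-graph: a countable (small) category `Λ` together with a degree functor
`d : Λ → P` satisfying the unique factorization property.  Morphisms form the type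
`El`; objects are identified with identity morphisms via the range map `rng`. -/
structure PGraph (P : Type*) [Monoid P] where
  El : Type*
  countable : Countable El
  src : El → El
  rng : El → El
  comp : (α β : El) → src α = rng β → El
  d : El → P
  src_rng : ∀ α, src (rng α) = rng α
  rng_rng : ∀ α, rng (rng α) = rng α
  src_src : ∀ α, src (src α) = src α
  rng_src : ∀ α, rng (src α) = src α
  rng_comp : ∀ α β h, rng (comp α β h) = rng α
  src_comp : ∀ α β h, src (comp α β h) = src β
  id_comp : ∀ β, comp (rng β) β (src_rng β) = β
  comp_id : ∀ α, comp α (src α) (rng_src α).symm = α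
  comp_assoc : ∀ α β γ (h₁ : src α = rng β) (h₂ : src β = rng γ),
      comp (comp α β h₁) γ ((src_comp α β h₁).trans h₂) =
      comp α (comp β γ h₂) (h₁.trans (rng_comp β γ h₂).symm)
  d_id : ∀ α, d (rng α) = 1
  d_comp : ∀ α β h, d (comp α β h) = d α * d β
  factor : ∀ α p q, d α = p * q →
      ∃! βγ : El × El, ∃ h : src βγ.1 = rng βγ.2,
        comp βγ.1 βγ.2 h = α ∧ d βγ.1 = p ∧ d βγ.2 = q

namespace PGraph

variable {P : Type*} [Monoid P] (Λ : PGraph P)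

/-- `αΛ`, the set of extensions of `α` (elements of which `α` is a prefix). -/
def ext (α : Λ.El) : Set Λ.El := {β | ∃ γ h, Λ.comp α γ h = β}

/-- `μ` is a minimal common extension of the set `S`. -/
def IsMCE (S : Set Λ.El) (μ : Λ.El) : Prop :=
  (∀ γ ∈ S, μ ∈ Λ.ext γ) ∧ ∀ ν, (∀ γ ∈ S, ν ∈ Λ.ext γ) → μ ∈ Λ.ext ν → ν = μ

/-- `v` is a vertex (identity morphism) of `Λ`. -/
def IsVertex (v : Λ.El) : Prop := Λ.rng v = v

end PGraph

/-- A representation of a finitely aligned `P`-graph `Λ` in a C*-algebra `B`: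
satisfies (R1) `t_α t_β = t_{αβ}`, (R2) `t_α* t_α = t_{s(α)}`, and
(R3) `t_α t_α* t_β t_β* = ∑_{γ ∈ α∨β} t_γ t_γ*`, where `mce α β` is the (finite)
set of minimal common extensions of `α` and `β`. -/
structure PGraphRep {P : Type*} [Monoid P] (Λ : PGraph P) (B : Type*)
    [NonUnitalNormedRing B] [StarRing B] [CStarRing B] [NormedSpace ℂ B]
    [IsScalarTower ℂ B B] [SMulCommClass ℂ B B] [StarModule ℂ B] [CompleteSpace B] where
  t : Λ.El → B
  mce : Λ.El → Λ.El → Finset Λ.El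
  mce_spec : ∀ α β γ, γ ∈ mce α β ↔ Λ.IsMCE {α, β} γ
  R1 : ∀ α β h, t α * t β = t (Λ.comp α β h)
  R2 : ∀ α, star (t α) * t α = t (Λ.src α)
  R3 : ∀ α β, t α * star (t α) * (t β * star (t β)) =
        ∑ γ ∈ mce α β, t γ * star (t γ)

/-- `E` is exhaustive in `αΛ`. -/
def PGraph.Exhaustive {P : Type*} [Monoid P] (Λ : PGraph P) (α : Λ.El) (E : Set Λ.El) : Prop :=
  ∀ β ∈ Λ.ext α, ∃ γ ∈ E, ∃ μ : Λ.El, μ ∈ Λ.ext β ∧ μ ∈ Λ.ext γ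


section PGraphAux

variable {B : Type*} [Ring B]

private lemma pgraphAux_mapne {α β : Type*} (f : α → β) (l : List α) (hl : l ≠ []) :
    l.map f ≠ [] := by
  cases l with
  | nil => exact absurd rfl hl
  | cons a l => simp

private lemma pgraphAux_absorb_left (e : B) :
    ∀ l : List B, (∀ x ∈ l, e * x = x) → l ≠ [] → e * l.prod = l.prod := by
  intro l
  induction l with
  | nil => intro _ h; exact absurd rfl h
  | cons x l' ih =>
    intro h _
    rw [List.prod_cons, ← mul_assoc, h x ((List.mem_cons_self : x ∈ x :: l'))]

private lemma pgraphAux_absorb_right (e : B) :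
    ∀ l : List B, (∀ x ∈ l, x * e = x) → l ≠ [] → l.prod * e = l.prod := by
  intro l
  induction l with
  | nil => intro _ h; exact absurd rfl h
  | cons x l' ih =>
    intro h _
    rcases eq_or_ne l' [] with rfl | hne
    · simp [h x ((List.mem_cons_self : x ∈ x :: []))]
    · rw [List.prod_cons, mul_assoc, ih (fun y hy => h y (List.mem_cons_of_mem _ hy)) hne]

private lemma pgraphAux_conj (a as e : B) (he : as * a = e) :
    ∀ l : List B, (∀ x ∈ l, e * x = x) → l ≠ [] →
      (l.map fun x => a * x * as).prod = a * l.prod * as := by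
  intro l
  induction l with
  | nil => intro _ h; exact absurd rfl h
  | cons x l' ih =>
    intro h hne
    rcases eq_or_ne l' [] with rfl | hne'
    · simp
    · rw [List.map_cons, List.prod_cons, List.prod_cons,
        ih (fun y hy => h y (List.mem_cons_of_mem _ hy)) hne']
      have habs : e * l'.prod = l'.prod :=
        pgraphAux_absorb_left e l' (fun y hy => h y (List.mem_cons_of_mem _ hy)) hne'
      calc (a * x * as) * (a * l'.prod * as) = a * (x * ((as * a) * l'.prod)) * as := by
            noncomm_ring
      _ = a * (x * l'.prod) * as := by rw [he, habs]

private lemma pgraphAux_e_prod (e : B) (hee : e * e = e) :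
    ∀ l : List B, (∀ x ∈ l, e * x = x ∧ x * e = x) → l ≠ [] →
      (l.map fun x => e - x).prod = e * (l.map fun x => 1 - x).prod := by
  intro l
  induction l with
  | nil => intro _ h; exact absurd rfl h
  | cons x l' ih =>
    intro h hne
    rcases eq_or_ne l' [] with rfl | hne'
    · simp only [List.map_cons, List.map_nil, List.prod_cons, List.prod_nil, mul_one]
      rw [mul_sub, mul_one, (h x ((List.mem_cons_self : x ∈ x :: []))).1]
    · rw [List.map_cons, List.prod_cons, List.map_cons, List.prod_cons,
        ih (fun y hy => h y (List.mem_cons_of_mem _ hy)) hne',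
        ← mul_assoc, ← mul_assoc]
      congr 1
      rw [sub_mul, (h x ((List.mem_cons_self : x ∈ x :: l'))).2, mul_sub, mul_one,
        (h x ((List.mem_cons_self : x ∈ x :: l'))).1, hee]

private lemma pgraphAux_one_sub (e : B) :
    ∀ l : List B, (∀ x ∈ l, e * x = x) →
      (1 - e) * (l.map fun x => 1 - x).prod = 1 - e := by
  intro l
  induction l with
  | nil => intro _; simp
  | cons x l' ih =>
    intro h
    rw [List.map_cons, List.prod_cons, ← mul_assoc]
    have hx := h x ((List.mem_cons_self : x ∈ x :: l'))
    have h1 : (1 - e) * (1 - x) = 1 - e := by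
      rw [sub_mul, one_mul, mul_sub, mul_one, hx]
      abel
    rw [h1, ih (fun y hy => h y (List.mem_cons_of_mem _ hy))]

end PGraphAux

/-- For a representation `t`, a vertex `v`, `α ∈ Λv`, a finite exhaustive
`E ⊆ αΛ` and the unique finite exhaustive `F ⊆ vΛ` with `E = αF`, one has
`∏_{γ∈E} (t_α t_α* − t_γ t_γ*) = t_α (∏_{β∈F} (t_v − t_β t_β*)) t_α*` (products over any
enumeration; the factors commute), and the left-hand product vanishes iff
`t_v = ⋁_{β∈F} t_β t_β* = 1 − ∏_{β∈F} (1 − t_β t_β*)`. -/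
theorem pgraphRep_exhaustive_product {G : Type*} [Group G] (P : Submonoid G)
    (hP : ∀ a : G, a ∈ P → a⁻¹ ∈ P → a = 1)
    (Λ : PGraph ↥P) {B : Type*}
    [NormedRing B] [StarRing B] [CStarRing B] [NormedAlgebra ℂ B]
    [StarModule ℂ B] [CompleteSpace B]
    [DecidableEq Λ.El] (t : PGraphRep Λ B)
    (v α : Λ.El) (hv : Λ.IsVertex v) (hα : Λ.src α = v)
    (E F : Finset Λ.El)
    (hE : ↑E ⊆ Λ.ext α) (hEex : Λ.Exhaustive α ↑E)
    (hF : ↑F ⊆ {β : Λ.El | Λ.rng β = v})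
    (hEF : (E : Set Λ.El) =
      {x : Λ.El | ∃ β ∈ F, ∃ h : Λ.src α = Λ.rng β, Λ.comp α β h = x}) :
    ∀ lE lF : List Λ.El, lE.Nodup → lE.toFinset = E → lF.Nodup → lF.toFinset = F →
      ((lE.map fun γ => t.t α * star (t.t α) - t.t γ * star (t.t γ)).prod =
        t.t α * (lF.map fun β => t.t v - t.t β * star (t.t β)).prod * star (t.t α)) ∧
      ((lE.map fun γ => t.t α * star (t.t α) - t.t γ * star (t.t γ)).prod = 0 ↔
        t.t v = 1 - (lF.map fun β => 1 - t.t β * star (t.t β)).prod) := by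

  intro lE lF hnE htE hnF htF
  classical
  -- basic identities
  have hv' : Λ.src v = v := by rw [← hv]; exact Λ.src_rng v
  have hR2v : star (t.t v) * t.t v = t.t v := by rw [t.R2 v, hv']
  have hsv : star (t.t v) = t.t v := by
    have h := congrArg star hR2v
    rw [star_mul, star_star, hR2v] at h
    exact h.symm
  have hvv : t.t v * t.t v = t.t v := by nth_rewrite 1 [← hsv]; exact hR2v
  have hvb : ∀ b, Λ.rng b = v → t.t v * t.t b = t.t b := by
    intro b hb
    subst hb
    rw [t.R1 (Λ.rng b) b (Λ.src_rng b), Λ.id_comp b]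
  have hbv' : ∀ b, Λ.rng b = v → star (t.t b) * t.t v = star (t.t b) := by
    intro b hb
    rw [← hsv, ← star_mul, hvb b hb]
  have hαv : t.t α * t.t v = t.t α := by
    rw [← hα, t.R1 α (Λ.src α) (Λ.rng_src α).symm]
    exact congrArg t.t (Λ.comp_id α)
  have hαα : star (t.t α) * t.t α = t.t v := by rw [t.R2 α, hα]
  have hqabs : ∀ b, Λ.rng b = v →
      t.t v * (t.t b * star (t.t b)) = t.t b * star (t.t b) ∧
        t.t b * star (t.t b) * t.t v = t.t b * star (t.t b) := by
    intro b hb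
    exact ⟨by rw [← mul_assoc, hvb b hb], by rw [mul_assoc, hbv' b hb]⟩
  have hfabs : ∀ b, Λ.rng b = v →
      t.t v * (t.t v - t.t b * star (t.t b)) = t.t v - t.t b * star (t.t b) ∧
        (t.t v - t.t b * star (t.t b)) * t.t v = t.t v - t.t b * star (t.t b) := by
    intro b hb
    constructor
    · rw [mul_sub, hvv, (hqabs b hb).1]
    · rw [sub_mul, hvv, (hqabs b hb).2]
  have hqq : ∀ b b', t.t b * star (t.t b) * (t.t b' * star (t.t b'))
      = t.t b' * star (t.t b') * (t.t b * star (t.t b)) := by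
    intro b b'
    have hm : t.mce b b' = t.mce b' b := by
      ext μ
      rw [t.mce_spec, t.mce_spec, Set.pair_comm]
    rw [t.R3, t.R3, hm]
  have hl1 : ∀ b b', Λ.rng b = v → Λ.rng b' = v →
      (t.t v - t.t b * star (t.t b)) * (t.t v - t.t b' * star (t.t b'))
        = t.t v - t.t b' * star (t.t b') - t.t b * star (t.t b)
          + t.t b * star (t.t b) * (t.t b' * star (t.t b')) := by
    intro b b' hb hb'
    rw [sub_mul, mul_sub, mul_sub, hvv, (hqabs b' hb').1, (hqabs b hb).2]
    abel
  have hcommute : ∀ b b', Λ.rng b = v → Λ.rng b' = v →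
      Commute (t.t v - t.t b * star (t.t b)) (t.t v - t.t b' * star (t.t b')) := by
    intro b b' hb hb'
    show (t.t v - t.t b * star (t.t b)) * (t.t v - t.t b' * star (t.t b'))
        = (t.t v - t.t b' * star (t.t b')) * (t.t v - t.t b * star (t.t b))
    rw [hl1 b b' hb hb', hl1 b' b hb' hb, hqq b b']
    abel
  have hfactor : ∀ (b : Λ.El) (h : Λ.src α = Λ.rng b),
      t.t α * (t.t v - t.t b * star (t.t b)) * star (t.t α)
        = t.t α * star (t.t α)
          - t.t (Λ.comp α b h) * star (t.t (Λ.comp α b h)) := by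
    intro b h
    have h1 : t.t α * t.t b = t.t (Λ.comp α b h) := t.R1 α b h
    have expand : t.t α * (t.t v - t.t b * star (t.t b)) * star (t.t α)
        = t.t α * t.t v * star (t.t α)
          - t.t α * t.t b * (star (t.t b) * star (t.t α)) := by
      noncomm_ring
    rw [expand, hαv, h1, ← star_mul, h1]
  -- nonemptiness
  have hEne : E.Nonempty := by
    obtain ⟨γ, hγ, -⟩ := hEex α ⟨Λ.src α, (Λ.rng_src α).symm, Λ.comp_id α⟩
    exact ⟨γ, hγ⟩
  have hlEne : lE ≠ [] := by
    rintro rfl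
    rcases hEne with ⟨x, hx⟩
    rw [← htE] at hx
    simp at hx
  have hmemE : ∀ x ∈ lE, x ∈ E := by
    intro x hx
    rw [← htE]
    exact List.mem_toFinset.mpr hx
  -- the section g of β ↦ αβ
  have key' : ∀ γ : Λ.El, ∃ b, γ ∈ E →
      b ∈ F ∧ ∃ h : Λ.src α = Λ.rng b, Λ.comp α b h = γ := by
    intro γ
    by_cases hγ : γ ∈ E
    · have hγ' : γ ∈ (E : Set Λ.El) := hγ
      rw [hEF] at hγ'
      obtain ⟨b, hbF, h, hc⟩ := hγ'
      exact ⟨b, fun _ => ⟨hbF, h, hc⟩⟩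
    · exact ⟨v, fun h => absurd h hγ⟩
  choose g hg using key'
  -- injectivity of β ↦ αβ
  have hinj : ∀ (b b' : Λ.El) (h : Λ.src α = Λ.rng b) (h' : Λ.src α = Λ.rng b'),
      Λ.comp α b h = Λ.comp α b' h' → b = b' := by
    intro b b' h h' hcc
    have hd : Λ.d b = Λ.d b' := by
      have h1 : Λ.d α * Λ.d b = Λ.d α * Λ.d b' := by
        rw [← Λ.d_comp α b h, ← Λ.d_comp α b' h', hcc]
      have h2 : ((Λ.d α : ↥P) : G) * ((Λ.d b : ↥P) : G)
          = ((Λ.d α : ↥P) : G) * ((Λ.d b' : ↥P) : G) := by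
        exact_mod_cast congrArg (fun x : ↥P => (x : G)) h1
      exact Subtype.ext (mul_left_cancel h2)
    obtain ⟨pr, hpr, huniq⟩ := Λ.factor (Λ.comp α b h) (Λ.d α) (Λ.d b) (Λ.d_comp α b h)
    have e1 : (α, b) = pr := huniq (α, b) ⟨h, rfl, rfl, rfl⟩
    have e2 : (α, b') = pr := huniq (α, b') ⟨h', hcc.symm, rfl, hd.symm⟩
    exact congrArg Prod.snd (e1.trans e2.symm)
  -- a total version of β ↦ αβ, to avoid dependent rewriting
  have hcomp_c : ∀ (b : Λ.El) (h : Λ.src α = Λ.rng b),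
      (if h' : Λ.src α = Λ.rng b then Λ.comp α b h' else b) = Λ.comp α b h := by
    intro b h
    rw [dif_pos h]
  have hginj : ∀ x ∈ E, ∀ y ∈ E, g x = g y → x = y := by
    intro x hx y hy hxy
    obtain ⟨-, hx1, hx2⟩ := hg x hx
    obtain ⟨-, hy1, hy2⟩ := hg y hy
    rw [← hx2, ← hy2, ← hcomp_c _ hx1, ← hcomp_c _ hy1, hxy]
  have hsurj : ∀ b ∈ F, ∃ γ ∈ E, g γ = b := by
    intro b hb
    have hbv : Λ.rng b = v := hF hb
    have h : Λ.src α = Λ.rng b := by rw [hα, hbv]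
    have hγE : Λ.comp α b h ∈ E := by
      have h2 : Λ.comp α b h ∈ (E : Set Λ.El) := by
        rw [hEF]; exact ⟨b, hb, h, rfl⟩
      exact h2
    obtain ⟨hgF, h', hgc⟩ := hg _ hγE
    exact ⟨_, hγE, hinj _ b h' h hgc⟩
  have hlF'nd : (lE.map g).Nodup := by
    refine List.Nodup.map_on ?_ hnE
    intro x hx y hy hxy
    exact hginj x (hmemE x hx) y (hmemE y hy) hxy
  have hlF'tf : (lE.map g).toFinset = F := by
    ext b
    simp only [List.mem_toFinset, List.mem_map]
    constructor
    · rintro ⟨x, hx, rfl⟩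
      exact (hg x (hmemE x hx)).1
    · intro hb
      obtain ⟨γ, hγ, hgγ⟩ := hsurj b hb
      exact ⟨γ, by rw [← List.mem_toFinset, htE]; exact hγ, hgγ⟩
  have hperm : (lE.map g).Perm lF :=
    List.perm_of_nodup_nodup_toFinset_eq hlF'nd hnF (by rw [hlF'tf, htF])
  have hmemglF : ∀ b ∈ lE.map g, Λ.rng b = v := by
    intro b hb
    obtain ⟨x, hx, rfl⟩ := List.mem_map.mp hb
    exact hF (hg x (hmemE x hx)).1
  have hmemlF : ∀ b ∈ lF, Λ.rng b = v := by
    intro b hb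
    have h2 : b ∈ F := by rw [← htF]; exact List.mem_toFinset.mpr hb
    exact hF h2
  have hlFne : lF ≠ [] := by
    rintro rfl
    obtain ⟨γ0, hγ0⟩ := hEne
    have h1 : g γ0 ∈ F := (hg γ0 hγ0).1
    rw [← htF] at h1
    simp at h1
  -- part 1
  have hmap : (lE.map fun γ => t.t α * star (t.t α) - t.t γ * star (t.t γ))
      = (lE.map g).map
          (fun b => t.t α * (t.t v - t.t b * star (t.t b)) * star (t.t α)) := by
    rw [List.map_map]
    refine List.map_congr_left ?_
    intro γ hγ
    obtain ⟨hgF, hh, hcc⟩ := hg γ (hmemE γ hγ)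
    have h2 := hfactor (g γ) hh
    rw [hcc] at h2
    exact h2.symm
  have hmap2 : ((lE.map g).map
        fun b => t.t α * (t.t v - t.t b * star (t.t b)) * star (t.t α))
      = (((lE.map g).map fun b => t.t v - t.t b * star (t.t b)).map
          fun x => t.t α * x * star (t.t α)) := by
    simp [List.map_map, Function.comp_def]
  have habs1 : ∀ x ∈ (lE.map g).map fun b => t.t v - t.t b * star (t.t b),
      t.t v * x = x := by
    intro x hx
    obtain ⟨b, hb, rfl⟩ := List.mem_map.mp hx
    exact (hfabs b (hmemglF b hb)).1
  have hne1 : ((lE.map g).map fun b => t.t v - t.t b * star (t.t b)) ≠ [] :=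
    pgraphAux_mapne _ _ (pgraphAux_mapne _ _ hlEne)
  have hpp : ((lE.map g).map fun b => t.t v - t.t b * star (t.t b)).prod
      = (lF.map fun β => t.t v - t.t β * star (t.t β)).prod := by
    refine List.Perm.prod_eq' (hperm.map _) ?_
    refine List.pairwise_of_forall_mem_list ?_
    intro x hx y hy
    obtain ⟨b, hb, rfl⟩ := List.mem_map.mp hx
    obtain ⟨b', hb', rfl⟩ := List.mem_map.mp hy
    exact hcommute b b' (hmemglF b hb) (hmemglF b' hb')
  have part1 : (lE.map fun γ => t.t α * star (t.t α) - t.t γ * star (t.t γ)).prod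
      = t.t α * (lF.map fun β => t.t v - t.t β * star (t.t β)).prod * star (t.t α) := by
    rw [hmap, hmap2,
      pgraphAux_conj (t.t α) (star (t.t α)) (t.t v) hαα _ habs1 hne1, hpp]
  refine ⟨part1, ?_⟩
  -- part 2
  have hXabsL : t.t v * (lF.map fun β => t.t v - t.t β * star (t.t β)).prod
      = (lF.map fun β => t.t v - t.t β * star (t.t β)).prod := by
    refine pgraphAux_absorb_left (t.t v) _ ?_ (pgraphAux_mapne _ _ hlFne)
    intro x hx
    obtain ⟨b, hb, rfl⟩ := List.mem_map.mp hx
    exact (hfabs b (hmemlF b hb)).1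
  have hXabsR : (lF.map fun β => t.t v - t.t β * star (t.t β)).prod * t.t v
      = (lF.map fun β => t.t v - t.t β * star (t.t β)).prod := by
    refine pgraphAux_absorb_right (t.t v) _ ?_ (pgraphAux_mapne _ _ hlFne)
    intro x hx
    obtain ⟨b, hb, rfl⟩ := List.mem_map.mp hx
    exact (hfabs b (hmemlF b hb)).2
  have hXY : (lF.map fun β => t.t v - t.t β * star (t.t β)).prod
      = t.t v * (lF.map fun β => 1 - t.t β * star (t.t β)).prod := by
    have h0 := pgraphAux_e_prod (t.t v) hvv (lF.map fun b => t.t b * star (t.t b))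
      (by
        intro x hx
        obtain ⟨b, hb, rfl⟩ := List.mem_map.mp hx
        exact hqabs b (hmemlF b hb))
      (pgraphAux_mapne _ _ hlFne)
    simpa only [List.map_map, Function.comp_def] using h0
  have h1subtv : (1 - t.t v) * (lF.map fun β => 1 - t.t β * star (t.t β)).prod
      = 1 - t.t v := by
    have h0 := pgraphAux_one_sub (t.t v) (lF.map fun b => t.t b * star (t.t b))
      (by
        intro x hx
        obtain ⟨b, hb, rfl⟩ := List.mem_map.mp hx
        exact (hqabs b (hmemlF b hb)).1)
    simpa only [List.map_map, Function.comp_def] using h0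
  rw [part1]
  constructor
  · intro h0
    have h1 := congrArg (fun x => star (t.t α) * x * t.t α) h0
    simp only [mul_zero, zero_mul] at h1
    rw [show star (t.t α)
          * (t.t α * (lF.map fun β => t.t v - t.t β * star (t.t β)).prod * star (t.t α))
          * t.t α
        = star (t.t α) * t.t α * (lF.map fun β => t.t v - t.t β * star (t.t β)).prod
            * (star (t.t α) * t.t α) from by noncomm_ring,
      hαα, mul_assoc, hXabsR, hXabsL] at h1
    have h2 : t.t v * (lF.map fun β => 1 - t.t β * star (t.t β)).prod = 0 := by
      rw [← hXY]; exact h1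
    have h3 : (lF.map fun β => 1 - t.t β * star (t.t β)).prod = 1 - t.t v := by
      calc (lF.map fun β => 1 - t.t β * star (t.t β)).prod
          = t.t v * (lF.map fun β => 1 - t.t β * star (t.t β)).prod
            + (1 - t.t v) * (lF.map fun β => 1 - t.t β * star (t.t β)).prod := by
            noncomm_ring
      _ = 1 - t.t v := by rw [h2, h1subtv, zero_add]
    rw [h3, sub_sub_cancel]
  · intro h0
    have hY : (lF.map fun β => 1 - t.t β * star (t.t β)).prod = 1 - t.t v := by
      rw [h0, sub_sub_cancel]
    have hX0 : (lF.map fun β => t.t v - t.t β * star (t.t β)).prod = 0 := by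
      rw [hXY, hY, mul_sub, mul_one, hvv, sub_self]
    rw [hX0, mul_zero, zero_mul]
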